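/- arXiv:2202.05439 — 3 statements merged into one kernel-verified Lean document; each statement's English description precedes it below -/
import Mathlib

section
/- The minimizer of the Tikhonov functional with noisy data satisfies the stability estimate ‖A ȳ − A u₀‖² + α‖ȳ − u₀‖² ≤ δ² + α‖u₀‖². -/
/-- Stability estimate for the Tikhonov minimizer with noisy data:
`‖A ȳ − A u₀‖² + α‖ȳ − u₀‖² ≤ δ² + α‖u₀‖²`. -/
theorem tikhonov_stability_estimate
    {H K : Type*} [NormedAddCommGroup H] [InnerProductSpace ℝ H]
    [NormedAddCommGroup K] [InnerProductSpace ℝ K]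
    (A : H →L[ℝ] K) (b : K) (α : ℝ) (hα : 0 < α)
    (ybar : H)
    (hmin : ∀ y : H, ‖A ybar - b‖ ^ 2 + α * ‖ybar‖ ^ 2 ≤ ‖A y - b‖ ^ 2 + α * ‖y‖ ^ 2)
    (u₀ : H) (b_exact : K) (hexact : A u₀ = b_exact)
    (δ : ℝ) (hδ : 0 < δ) (hnoise : ‖b - b_exact‖ ≤ δ) :
    ‖A ybar - A u₀‖ ^ 2 + α * ‖ybar - u₀‖ ^ 2 ≤ δ ^ 2 + α * ‖u₀‖ ^ 2 := by
  set v : H := u₀ - ybar with hv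
  set q : ℝ := ‖A v‖ ^ 2 + α * ‖v‖ ^ 2 with hq
  set c : ℝ := inner ℝ (A ybar - b) (A v) + α * inner ℝ ybar v with hc
  have hqnn : 0 ≤ q := by positivity
  have key : ∀ t : ℝ, 0 ≤ t ^ 2 * q + 2 * t * c := by
    intro t
    have h := hmin (ybar + t • v)
    have e1 : A (ybar + t • v) - b = (A ybar - b) + t • A v := by
      rw [map_add, map_smul]; abel
    have e2 : ‖(A ybar - b) + t • A v‖ ^ 2
        = ‖A ybar - b‖ ^ 2 + 2 * (t * inner ℝ (A ybar - b) (A v)) + t ^ 2 * ‖A v‖ ^ 2 := by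
      rw [norm_add_sq_real, real_inner_smul_right, norm_smul, mul_pow]
      simp [Real.norm_eq_abs, sq_abs]
    have e3 : ‖ybar + t • v‖ ^ 2
        = ‖ybar‖ ^ 2 + 2 * (t * inner ℝ ybar v) + t ^ 2 * ‖v‖ ^ 2 := by
      rw [norm_add_sq_real, real_inner_smul_right, norm_smul, mul_pow]
      simp [Real.norm_eq_abs, sq_abs]
    rw [e1, e2, e3] at h
    simp only [hq, hc]
    nlinarith [h]
  have hc0 : c = 0 := by
    by_contra hne
    have h := key (-c / (q + 1))
    have hq1 : 0 < q + 1 := by linarith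
    have hcc : 0 < c ^ 2 := by positivity
    have : (-c / (q + 1)) ^ 2 * q + 2 * (-c / (q + 1)) * c
        = (c ^ 2 * q - 2 * c ^ 2 * (q + 1)) / (q + 1) ^ 2 := by
      field_simp; ring
    rw [this] at h
    have hnum : c ^ 2 * q - 2 * c ^ 2 * (q + 1) < 0 := by nlinarith
    have := div_nonneg_iff.mp h
    nlinarith [sq_nonneg (q + 1), div_neg_of_neg_of_pos hnum (by positivity : (0:ℝ) < (q+1)^2)]
  -- now expand the target
  have e4 : A ybar - A u₀ = (A ybar - b) + (b - b_exact) := by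
    rw [hexact]; abel
  have e5 : ‖A ybar - A u₀‖ ^ 2 = ‖A ybar - b‖ ^ 2
      + 2 * inner ℝ (A ybar - b) (b - b_exact) + ‖b - b_exact‖ ^ 2 := by
    rw [e4, norm_add_sq_real]
  have e6 : ‖ybar - u₀‖ ^ 2 = ‖ybar‖ ^ 2 - 2 * inner ℝ ybar u₀ + ‖u₀‖ ^ 2 := by
    rw [norm_sub_sq_real]
  have e7 : A v = A u₀ - A ybar := by rw [hv, map_sub]
  have e8 : inner ℝ (A ybar - b) (A v)
      = -‖A ybar - b‖ ^ 2 - inner ℝ (A ybar - b) (b - b_exact) := by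
    rw [e7, hexact]
    have : b_exact - A ybar = -((A ybar - b) + (b - b_exact)) := by abel
    rw [this, inner_neg_right, inner_add_right, real_inner_self_eq_norm_sq]
    ring
  have e9 : (inner ℝ ybar v : ℝ) = inner ℝ ybar u₀ - ‖ybar‖ ^ 2 := by
    rw [hv, inner_sub_right, real_inner_self_eq_norm_sq]
  rw [hc, e8, e9] at hc0
  have hδ2 : ‖b - b_exact‖ ^ 2 ≤ δ ^ 2 := by
    have := norm_nonneg (b - b_exact)
    nlinarith
  rw [e5, e6]
  nlinarith [norm_nonneg (A ybar - b), sq_nonneg ‖A ybar - b‖, sq_nonneg ‖ybar‖]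
end

section
/- If the regularization parameter is chosen as α = δ², then the minimizer of the Tikhonov functional with noisy data satisfies ‖u₀ − ȳ‖² ≤ 1 + ‖u₀‖². -/
open scoped RealInnerProductSpace

/-- If `0 ≤ t*L + t²*Q` for all real `t`, with `Q ≥ 0`, then `L = 0`. -/
lemma tikhonov_aux_lin_zero (L Q : ℝ) (hQ : 0 ≤ Q)
    (h : ∀ t : ℝ, 0 ≤ t * L + t ^ 2 * Q) : L = 0 := by
  by_contra hL
  have hQ1 : (0 : ℝ) < Q + 1 := by linarith
  have h1 := h (-L / (2 * (Q + 1)))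
  have hL2 : 0 < L ^ 2 := by positivity
  have h2 : 0 ≤ (-L / (2 * (Q + 1)) * L + (-L / (2 * (Q + 1))) ^ 2 * Q) * (2 * (Q + 1)) ^ 2 := by positivity
  have h3 : (-L / (2 * (Q + 1)) * L + (-L / (2 * (Q + 1))) ^ 2 * Q) * (2 * (Q + 1)) ^ 2
      = -L ^ 2 * (2 * (Q + 1)) + L ^ 2 * Q := by field_simp
  rw [h3] at h2
  nlinarith [mul_pos hL2 hQ1]

/-- With the parameter choice `α = δ²`, the Tikhonov minimizer with noisy data satisfies
`‖u₀ − ȳ‖² ≤ 1 + ‖u₀‖²`. -/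
theorem tikhonov_error_bound_alpha_eq_delta_sq
    {H K : Type*} [NormedAddCommGroup H] [InnerProductSpace ℝ H]
    [NormedAddCommGroup K] [InnerProductSpace ℝ K]
    (A : H →L[ℝ] K) (b : K) (δ : ℝ) (hδ : 0 < δ) (α : ℝ) (hα : α = δ ^ 2)
    (ybar : H)
    (hmin : ∀ y : H, ‖A ybar - b‖ ^ 2 + α * ‖ybar‖ ^ 2 ≤ ‖A y - b‖ ^ 2 + α * ‖y‖ ^ 2)
    (u₀ : H) (b_exact : K) (hexact : A u₀ = b_exact)
    (hnoise : ‖b - b_exact‖ ≤ δ) :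
    ‖u₀ - ybar‖ ^ 2 ≤ 1 + ‖u₀‖ ^ 2 := by
  set v : H := u₀ - ybar with hv
  set r : K := A ybar - b with hr
  have hαpos : 0 < α := by rw [hα]; positivity
  -- Euler–Lagrange equality
  have hL : ⟪r, A v⟫ + α * ⟪ybar, v⟫ = 0 := by
    have key : ∀ t : ℝ, 0 ≤ t * (2 * (⟪r, A v⟫ + α * ⟪ybar, v⟫))
        + t ^ 2 * (‖A v‖ ^ 2 + α * ‖v‖ ^ 2) := by
      intro t
      have h := hmin (ybar + t • v)
      have e1 : A (ybar + t • v) - b = r + t • A v := by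
        simp [hr, map_add, map_smul]; abel
      have e2 : ‖r + t • A v‖ ^ 2 = ‖r‖ ^ 2 + 2 * (t * ⟪r, A v⟫) + t ^ 2 * ‖A v‖ ^ 2 := by
        rw [norm_add_sq_real, real_inner_smul_right, norm_smul, mul_pow, Real.norm_eq_abs, sq_abs]
      have e3 : ‖ybar + t • v‖ ^ 2 = ‖ybar‖ ^ 2 + 2 * (t * ⟪ybar, v⟫) + t ^ 2 * ‖v‖ ^ 2 := by
        rw [norm_add_sq_real, real_inner_smul_right, norm_smul, mul_pow, Real.norm_eq_abs, sq_abs]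
      rw [e1, e2, e3] at h
      nlinarith [h]
    have := tikhonov_aux_lin_zero (2 * (⟪r, A v⟫ + α * ⟪ybar, v⟫))
      (‖A v‖ ^ 2 + α * ‖v‖ ^ 2) (by positivity) key
    linarith
  -- rewrite the inner products
  have hAv : A v = -r + (b_exact - b) := by
    simp [hv, hr, map_sub, hexact]
  have hinner1 : ⟪r, A v⟫ = -‖r‖ ^ 2 + ⟪r, b_exact - b⟫ := by
    rw [hAv, inner_add_right, inner_neg_right, real_inner_self_eq_norm_sq]
  have hinner2 : ⟪ybar, v⟫ = ⟪u₀, v⟫ - ‖v‖ ^ 2 := by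
    have : ybar = u₀ - v := by simp [hv]
    rw [this, inner_sub_left, real_inner_self_eq_norm_sq]
  -- bounds
  have hb1 : ⟪r, b_exact - b⟫ ≤ ‖r‖ * δ := by
    calc ⟪r, b_exact - b⟫ ≤ ‖r‖ * ‖b_exact - b‖ := real_inner_le_norm _ _
    _ ≤ ‖r‖ * δ := by
        apply mul_le_mul_of_nonneg_left _ (norm_nonneg _)
        rwa [norm_sub_rev]
  have hb2 : ⟪u₀, v⟫ ≤ ‖u₀‖ * ‖v‖ := real_inner_le_norm _ _
  rw [hinner1, hinner2] at hL
  have hδ2 : (0:ℝ) < δ ^ 2 := by positivity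
  nlinarith [sq_nonneg (2 * ‖r‖ - δ), mul_nonneg (le_of_lt hδ2) (sq_nonneg (‖u₀‖ - ‖v‖)),
    mul_le_mul_of_nonneg_left hb2 hαpos.le, sq_nonneg (‖u₀‖ - ‖v‖)]
end

section
/- The image of the error of the Tikhonov minimizer under the forward operator satisfies ‖A ȳ − A u₀‖² ≤ 4δ² + 2α‖u₀‖². -/
/-- Bound on the image of the error of the Tikhonov minimizer under the forward operator:
`‖A ȳ − A u₀‖² ≤ 4δ² + 2α‖u₀‖²`. -/
theorem tikhonov_forward_error_bound
    {H K : Type*} [NormedAddCommGroup H] [InnerProductSpace ℝ H]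
    [NormedAddCommGroup K] [InnerProductSpace ℝ K]
    (A : H →L[ℝ] K) (b : K) (α : ℝ) (hα : 0 < α)
    (ybar : H)
    (hmin : ∀ y : H, ‖A ybar - b‖ ^ 2 + α * ‖ybar‖ ^ 2 ≤ ‖A y - b‖ ^ 2 + α * ‖y‖ ^ 2)
    (u₀ : H) (b_exact : K) (hexact : A u₀ = b_exact)
    (δ : ℝ) (hδ : 0 < δ) (hnoise : ‖b - b_exact‖ ≤ δ) :
    ‖A ybar - A u₀‖ ^ 2 ≤ 4 * δ ^ 2 + 2 * α * ‖u₀‖ ^ 2 := by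
  have h1 := hmin u₀
  rw [hexact] at h1
  have hAu : ‖A u₀ - b‖ = ‖b - b_exact‖ := by rw [hexact, norm_sub_rev]
  rw [hexact] at hAu
  have hr : ‖A ybar - b‖ ^ 2 ≤ δ ^ 2 + α * ‖u₀‖ ^ 2 := by
    have : ‖b_exact - b‖ ≤ δ := by rwa [norm_sub_rev]
    nlinarith [norm_nonneg (b_exact - b), sq_nonneg (‖ybar‖), mul_nonneg hα.le (sq_nonneg ‖ybar‖)]
  have htri : ‖A ybar - A u₀‖ ≤ ‖A ybar - b‖ + ‖b - A u₀‖ := by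
    have := norm_add_le (A ybar - b) (b - A u₀)
    simpa using this
  have hb2 : ‖b - A u₀‖ ≤ δ := by rw [hexact]; exact hnoise
  nlinarith [norm_nonneg (A ybar - A u₀), norm_nonneg (A ybar - b), norm_nonneg (b - A u₀), sq_nonneg (‖A ybar - b‖ - ‖b - A u₀‖)]
end
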